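/- Under Assumptions 1–4, every price-equilibrium allocation a* is ordinally efficient. -/
import Mathlib


open MeasureTheory Pointwise

/-- The standard basis vector `e_x` in `ℝ^X`. -/
def basisVec {X : Type*} [DecidableEq X] (x : X) : X → ℝ := fun y => if y = x then 1 else 0

/-- The demand correspondence `D_i(q)`: cheapest most-preferred affordable objects
(as basis vectors), or `{0}` when nothing is affordable. -/
def Demand {X : Type*} [DecidableEq X] (pref : X → X → Prop) (b : ℝ) (q : X → ℝ) :
    Set (X → ℝ) :=
  {d | (∃ x, q x ≤ b ∧ d = basisVec x ∧
          (∀ y, q y ≤ b → pref x y) ∧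
          (∀ y, q y ≤ b → (∀ z, q z ≤ b → pref y z) → q x ≤ q y)) ∨
       ((¬ ∃ x, q x ≤ b) ∧ d = 0)}

/-- Lottery demand: the Aumann integral of the demand correspondence over the
price shock with law `G`. -/
def Lottery {X : Type*} [Fintype X] [DecidableEq X] (pref : X → X → Prop) (b : ℝ)
    (G : Measure (X → ℝ)) (p : X → ℝ) : Set (X → ℝ) :=
  {a | ∃ g : (X → ℝ) → (X → ℝ), Measurable g ∧
        (∀ᵐ ξ ∂G, g ξ ∈ Demand pref b (p + ξ)) ∧ a = ∫ ξ, g ξ ∂G}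

/-- Assumption 1: each coordinate of the price shock is atomless, mean-zero,
and almost surely bounded in `[ξlo, ξhi]`. -/
def Assumption1 {X : Type*} [Fintype X] (G : Measure (X → ℝ)) (ξlo ξhi : ℝ) : Prop :=
  ∀ x : X, (∀ r : ℝ, G {ξ | ξ x = r} = 0) ∧ (∫ ξ, ξ x ∂G) = 0 ∧
    (∀ᵐ ξ ∂G, ξlo ≤ ξ x ∧ ξ x ≤ ξhi)

open Classical in
/-- `a'` stochastically dominates `a` with respect to the preference `pref`. -/
noncomputable def StochDom {X : Type*} [Fintype X] (pref : X → X → Prop)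
    (a' a : X → ℝ) : Prop :=
  ∀ x : X, ∑ y ∈ Finset.univ.filter (fun y => pref y x), a y ≤
    ∑ y ∈ Finset.univ.filter (fun y => pref y x), a' y

open Classical in
/-- Strict stochastic dominance. -/
noncomputable def StrictStochDom {X : Type*} [Fintype X] (pref : X → X → Prop)
    (a' a : X → ℝ) : Prop :=
  StochDom pref a' a ∧
    ∃ x : X, ∑ y ∈ Finset.univ.filter (fun y => pref y x), a y <
      ∑ y ∈ Finset.univ.filter (fun y => pref y x), a' y

/-- An allocation: each agent gets a sub-probability vector over objects, and the
aggregate consumption does not exceed supply. -/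
def FeasibleAlloc {X I : Type*} [Fintype X] [Fintype I]
    (f : I → ℝ) (s : X → ℝ) (a : I → X → ℝ) : Prop :=
  (∀ i x, 0 ≤ a i x ∧ a i x ≤ 1) ∧ (∀ i, ∑ x, a i x ≤ 1) ∧
    (∀ x, ∑ i, f i * a i x ≤ s x)


open Classical

lemma prefLeast {X : Type*} {pref : X → X → Prop}
    (hcomp : ∀ x y, pref x y ∨ pref y x) (htrans : Transitive pref)
    (s : Finset X) (hs : s.Nonempty) : ∃ x ∈ s, ∀ y ∈ s, pref y x := by
  classical
  induction s using Finset.induction with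
  | empty => exact absurd hs (by simp)
  | @insert a t hnotmem ih =>
    rcases t.eq_empty_or_nonempty with rfl | ht
    · exact ⟨a, by simp, by simpa using (hcomp a a).elim id id⟩
    · obtain ⟨x0, hx0, hleast⟩ := ih ht
      rcases hcomp a x0 with h | h
      · exact ⟨x0, Finset.mem_insert_of_mem hx0, by
          intro y hy
          rcases Finset.mem_insert.1 hy with rfl | hy
          · exact h
          · exact hleast y hy⟩
      · refine ⟨a, Finset.mem_insert_self a t, ?_⟩
        intro y hy
        rcases Finset.mem_insert.1 hy with rfl | hy
        · exact (hcomp y y).elim id id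
        · exact htrans (hleast y hy) h

lemma abel_aux {X : Type*} [Fintype X] {pref : X → X → Prop}
    (hcomp : ∀ x y, pref x y ∨ pref y x) (htrans : Transitive pref)
    (d : X → ℝ) :
    ∀ (n : ℕ) (s : Finset X) (w : X → ℝ), s.card ≤ n →
      (∀ x ∈ s, 0 ≤ w x) →
      (∀ x ∈ s, ∀ y ∈ s, pref x y → w y ≤ w x) →
      (∀ x ∈ s, 0 ≤ ∑ y ∈ s.filter (fun y => pref y x), d y) →
      0 ≤ ∑ x ∈ s, w x * d x := by
  intro n
  induction n with
  | zero =>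
    intro s w hcard _ _ _
    rw [Finset.card_eq_zero.1 (Nat.le_zero.1 hcard)]
    simp
  | succ n ih =>
    intro s w hcard hw0 hwmono hcum
    rcases s.eq_empty_or_nonempty with rfl | hs
    · simp
    obtain ⟨xm, hxm, hmin⟩ := s.exists_min_image w hs
    set π1 := w xm with hπ1
    obtain ⟨x0, hx0, hleast⟩ := prefLeast hcomp htrans s hs
    have hsd : 0 ≤ ∑ y ∈ s, d y := by
      have := hcum x0 hx0
      rwa [Finset.filter_true_of_mem (fun y hy => hleast y hy)] at this
    set U := s.filter (fun x => π1 < w x) with hU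
    have hUsub : U ⊆ s := Finset.filter_subset _ s
    have hUcard : U.card ≤ n := by
      have hss : U ⊂ s := Finset.filter_ssubset.2 ⟨xm, hxm, lt_irrefl _⟩
      have h := Finset.card_lt_card hss
      omega
    have hsplit : ∑ x ∈ s, w x * d x
        = ∑ x ∈ s, (w x - π1) * d x + π1 * ∑ x ∈ s, d x := by
      rw [Finset.mul_sum, ← Finset.sum_add_distrib]
      exact Finset.sum_congr rfl fun x _ => by ring
    have hres : ∑ x ∈ s, (w x - π1) * d x = ∑ x ∈ U, (w x - π1) * d x := by
      refine (Finset.sum_subset hUsub ?_).symm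
      intro x hxs hxU
      have h1 : π1 ≤ w x := hmin x hxs
      have h2 : ¬ π1 < w x := by
        intro h
        exact hxU (Finset.mem_filter.2 ⟨hxs, h⟩)
      have : w x = π1 := le_antisymm (not_lt.1 h2) h1
      rw [this]; ring
    have hind : 0 ≤ ∑ x ∈ U, (w x - π1) * d x := by
      refine ih U (fun x => w x - π1) hUcard ?_ ?_ ?_
      · intro x hx
        have := (Finset.mem_filter.1 hx).2
        show (0:ℝ) ≤ w x - π1
        linarith
      · intro x hx y hy hxy
        have := hwmono x (hUsub hx) y (hUsub hy) hxy
        show w y - π1 ≤ w x - π1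
        linarith
      · intro x hx
        have heq : U.filter (fun y => pref y x) = s.filter (fun y => pref y x) := by
          apply Finset.Subset.antisymm
          · exact Finset.filter_subset_filter _ hUsub
          · intro y hy
            obtain ⟨hys, hyx⟩ := Finset.mem_filter.1 hy
            refine Finset.mem_filter.2 ⟨Finset.mem_filter.2 ⟨hys, ?_⟩, hyx⟩
            have hwx := (Finset.mem_filter.1 hx).2
            have := hwmono y hys x (hUsub hx) hyx
            linarith
        rw [heq]
        exact hcum x (hUsub hx)
    have hπ10 : 0 ≤ π1 := hw0 xm hxm
    rw [hsplit]
    have : 0 ≤ π1 * ∑ y ∈ s, d y := mul_nonneg hπ10 hsd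
    linarith [hres ▸ hind]

lemma cost_mono {X : Type*} [Fintype X] {pref : X → X → Prop}
    (hcomp : ∀ x y, pref x y ∨ pref y x) (htrans : Transitive pref)
    (p w a' astar : X → ℝ)
    (hp : ∀ x, 0 ≤ p x)
    (hw_ub : ∀ x y, pref y x → w x ≤ p y)
    (hw_att : ∀ x, ∃ y, pref y x ∧ p y = w x)
    (ha' : ∀ x, 0 ≤ a' x)
    (hstar : ∀ x, astar x ≠ 0 → p x = w x)
    (hSD : StochDom pref a' astar) :
    ∑ x, p x * astar x ≤ ∑ x, p x * a' x := by
  have hrefl : ∀ x, pref x x := fun x => (hcomp x x).elim id id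
  have hw_le : ∀ x, w x ≤ p x := fun x => hw_ub x x (hrefl x)
  have hw0 : ∀ x, 0 ≤ w x := by
    intro x
    obtain ⟨y, _, hpy⟩ := hw_att x
    rw [← hpy]; exact hp y
  have hwmono : ∀ x y, pref x y → w y ≤ w x := by
    intro x y hxy
    obtain ⟨z, hz, hpz⟩ := hw_att x
    have := hw_ub y z (htrans hz hxy)
    linarith
  have h1 : ∑ x, p x * astar x = ∑ x, w x * astar x := by
    refine Finset.sum_congr rfl fun x _ => ?_
    by_cases h : astar x = 0
    · rw [h]; ring
    · rw [hstar x h]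
  have habel : 0 ≤ ∑ x, w x * (a' x - astar x) := by
    refine abel_aux hcomp htrans (fun y => a' y - astar y) (Fintype.card X)
      Finset.univ w (by simp) (fun x _ => hw0 x)
      (fun x _ y _ h => hwmono x y h) ?_
    intro x _
    rw [Finset.sum_sub_distrib]
    have := hSD x
    linarith
  have e2 : ∑ x, w x * (a' x - astar x) = ∑ x, w x * a' x - ∑ x, w x * astar x := by
    rw [← Finset.sum_sub_distrib]
    exact Finset.sum_congr rfl fun x _ => by ring
  have h3 : 0 ≤ ∑ x, (p x - w x) * a' x :=
    Finset.sum_nonneg fun x _ => mul_nonneg (by linarith [hw_le x]) (ha' x)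
  have e1 : ∑ x, p x * a' x = ∑ x, (p x - w x) * a' x + ∑ x, w x * a' x := by
    rw [← Finset.sum_add_distrib]
    exact Finset.sum_congr rfl fun x _ => by ring
  linarith

lemma cost_strict {X : Type*} [Fintype X] {pref : X → X → Prop}
    (hcomp : ∀ x y, pref x y ∨ pref y x) (htrans : Transitive pref)
    (p w a' astar : X → ℝ)
    (hp : ∀ x, 0 ≤ p x)
    (hw_ub : ∀ x y, pref y x → w x ≤ p y)
    (hw_att : ∀ x, ∃ y, pref y x ∧ p y = w x)
    (ha' : ∀ x, 0 ≤ a' x)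
    (hstar : ∀ x, astar x ≠ 0 → p x = w x)
    (hstar_up : ∀ x y, astar y ≠ 0 → w x ≤ p y → pref y x)
    (htot : ∑ x, a' x ≤ ∑ x, astar x)
    (hSD : StochDom pref a' astar)
    (x0 : X)
    (hx0 : ∑ y ∈ Finset.univ.filter (fun y => pref y x0), astar y <
           ∑ y ∈ Finset.univ.filter (fun y => pref y x0), a' y) :
    ∑ x, p x * astar x < ∑ x, p x * a' x := by
  have hrefl : ∀ x, pref x x := fun x => (hcomp x x).elim id id
  have hw_le : ∀ x, w x ≤ p x := fun x => hw_ub x x (hrefl x)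
  have hw0 : ∀ x, 0 ≤ w x := by
    intro x
    obtain ⟨y, _, hpy⟩ := hw_att x
    rw [← hpy]; exact hp y
  have hwmono : ∀ x y, pref x y → w y ≤ w x := by
    intro x y hxy
    obtain ⟨z, hz, hpz⟩ := hw_att x
    have := hw_ub y z (htrans hz hxy)
    linarith
  set π := w x0 with hπ
  set U := Finset.univ.filter (fun x => π ≤ w x) with hUdef
  have hupsub : Finset.univ.filter (fun y => pref y x0) ⊆ U := by
    intro y hy
    have hyx0 := (Finset.mem_filter.1 hy).2
    exact Finset.mem_filter.2 ⟨Finset.mem_univ y, hwmono y x0 hyx0⟩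
  have hUstar : ∑ x ∈ U, astar x = ∑ y ∈ Finset.univ.filter (fun y => pref y x0), astar y := by
    refine (Finset.sum_subset hupsub ?_).symm
    intro x hxU hxnot
    by_contra hne
    have hwx := (Finset.mem_filter.1 hxU).2
    have : pref x x0 := hstar_up x0 x hne (le_trans hwx (hw_le x))
    exact hxnot (Finset.mem_filter.2 ⟨Finset.mem_univ x, this⟩)
  have hUa' : ∑ y ∈ Finset.univ.filter (fun y => pref y x0), a' y ≤ ∑ x ∈ U, a' x :=
    Finset.sum_le_sum_of_subset_of_nonneg hupsub (fun x _ _ => ha' x)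
  have hM : 0 < ∑ x ∈ U, a' x - ∑ x ∈ U, astar x := by
    rw [hUstar]; linarith
  have hUne : U ≠ Finset.univ := by
    intro h
    rw [h] at hM
    linarith
  obtain ⟨x1, _, hx1U⟩ := Finset.exists_of_ssubset (ssubset_of_subset_of_ne (Finset.subset_univ U) hUne)
  have hx1V : ¬ π ≤ w x1 := fun h => hx1U (Finset.mem_filter.2 ⟨Finset.mem_univ x1, h⟩)
  set V := Finset.univ.filter (fun x => ¬ π ≤ w x) with hVdef
  have hVne : V.Nonempty := ⟨x1, Finset.mem_filter.2 ⟨Finset.mem_univ x1, hx1V⟩⟩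
  set π2 := V.sup' hVne w with hπ2
  have hπ2lt : π2 < π := by
    rw [hπ2, Finset.sup'_lt_iff]
    intro x hx
    exact lt_of_not_ge (Finset.mem_filter.1 hx).2
  have hπ20 : 0 ≤ π2 :=
    le_trans (hw0 x1) (Finset.le_sup' w (Finset.mem_filter.2 ⟨Finset.mem_univ x1, hx1V⟩))
  set v : X → ℝ := fun x => if π ≤ w x then w x - (π - π2) else w x with hvdef
  have hv0 : ∀ x, 0 ≤ v x := by
    intro x
    rw [hvdef]
    dsimp only
    split_ifs with h
    · linarith
    · exact hw0 x
  have hvmono : ∀ x y, pref x y → v y ≤ v x := by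
    intro x y hxy
    have hw := hwmono x y hxy
    rw [hvdef]
    dsimp only
    split_ifs with h1 h2 h2
    · linarith
    · -- y in U, x not: impossible
      exact absurd (le_trans h1 hw) h2
    · -- x in U, y not
      have : w y ≤ π2 := Finset.le_sup' w (Finset.mem_filter.2 ⟨Finset.mem_univ y, h1⟩)
      linarith
    · linarith
  have habel : 0 ≤ ∑ x, v x * (a' x - astar x) := by
    refine abel_aux hcomp htrans (fun y => a' y - astar y) (Fintype.card X)
      Finset.univ v (by simp) (fun x _ => hv0 x)
      (fun x _ y _ h => hvmono x y h) ?_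
    intro x _
    rw [Finset.sum_sub_distrib]
    have := hSD x
    linarith
  have hid : ∑ x, w x * (a' x - astar x)
      = ∑ x, v x * (a' x - astar x) + (π - π2) * (∑ x ∈ U, a' x - ∑ x ∈ U, astar x) := by
    have step : ∀ x, w x * (a' x - astar x) - v x * (a' x - astar x)
        = if π ≤ w x then (π - π2) * (a' x - astar x) else 0 := by
      intro x
      rw [hvdef]
      dsimp only
      split_ifs with h
      · ring
      · ring
    have : ∑ x, (w x * (a' x - astar x) - v x * (a' x - astar x))
        = (π - π2) * ∑ x ∈ U, (a' x - astar x) := by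
      rw [Finset.mul_sum, hUdef, Finset.sum_filter]
      exact Finset.sum_congr rfl fun x _ => step x
    rw [Finset.sum_sub_distrib] at this
    rw [Finset.sum_sub_distrib] at this
    linarith [this]
  have h1 : ∑ x, p x * astar x = ∑ x, w x * astar x := by
    refine Finset.sum_congr rfl fun x _ => ?_
    by_cases h : astar x = 0
    · rw [h]; ring
    · rw [hstar x h]
  have e2 : ∑ x, w x * (a' x - astar x) = ∑ x, w x * a' x - ∑ x, w x * astar x := by
    rw [← Finset.sum_sub_distrib]
    exact Finset.sum_congr rfl fun x _ => by ring
  have h3 : 0 ≤ ∑ x, (p x - w x) * a' x :=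
    Finset.sum_nonneg fun x _ => mul_nonneg (by linarith [hw_le x]) (ha' x)
  have e1 : ∑ x, p x * a' x = ∑ x, (p x - w x) * a' x + ∑ x, w x * a' x := by
    rw [← Finset.sum_add_distrib]
    exact Finset.sum_congr rfl fun x _ => by ring
  have hpos : 0 < (π - π2) * (∑ x ∈ U, a' x - ∑ x ∈ U, astar x) :=
    mul_pos (by linarith) hM
  linarith


lemma demand_coord_bounds {X : Type*} [DecidableEq X] {pref : X → X → Prop} {b : ℝ}
    {q : X → ℝ} {d : X → ℝ} (h : d ∈ Demand pref b q) (x : X) :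
    0 ≤ d x ∧ d x ≤ 1 := by
  rcases h with ⟨y, _, hd, _⟩ | ⟨_, hd⟩
  · rw [hd]
    unfold basisVec
    split_ifs <;> norm_num
  · rw [hd]
    norm_num

lemma lottery_coord {X : Type*} [Fintype X] [DecidableEq X] {pref : X → X → Prop} {b : ℝ}
    {G : Measure (X → ℝ)} [IsProbabilityMeasure G] {p astar : X → ℝ}
    (h : astar ∈ Lottery pref b G p) :
    ∃ g : (X → ℝ) → (X → ℝ), Measurable g ∧
      (∀ᵐ ξ ∂G, g ξ ∈ Demand pref b (p + ξ)) ∧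
      Integrable g G ∧ (∀ x, astar x = ∫ ξ, g ξ x ∂G) := by
  obtain ⟨g, hm, hae, heq⟩ := h
  have hint : Integrable g G := by
    refine ⟨hm.aestronglyMeasurable, HasFiniteIntegral.of_bounded (C := 1) ?_⟩
    refine hae.mono fun ξ hξ => ?_
    rw [pi_norm_le_iff_of_nonneg zero_le_one]
    intro x
    have := demand_coord_bounds hξ x
    rw [Real.norm_eq_abs, abs_le]
    constructor <;> linarith [this.1, this.2]
  refine ⟨g, hm, hae, hint, fun x => ?_⟩
  have := (ContinuousLinearMap.proj (R := ℝ) (φ := fun _ : X => ℝ) x).integral_comp_comm hint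
  simp only [ContinuousLinearMap.proj_apply] at this
  rw [heq, ← this]

lemma lottery_nonneg_le_one {X : Type*} [Fintype X] [DecidableEq X] {pref : X → X → Prop}
    {b : ℝ} {G : Measure (X → ℝ)} [IsProbabilityMeasure G] {p astar : X → ℝ}
    (h : astar ∈ Lottery pref b G p) (x : X) :
    0 ≤ astar x ∧ astar x ≤ 1 := by
  obtain ⟨g, hm, hae, hint, hcoord⟩ := lottery_coord h
  have hintx : Integrable (fun ξ => g ξ x) G :=
    (ContinuousLinearMap.proj (R := ℝ) (φ := fun _ : X => ℝ) x).integrable_comp hint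
  constructor
  · rw [hcoord x]
    refine integral_nonneg_of_ae (hae.mono fun ξ hξ => (demand_coord_bounds hξ x).1)
  · rw [hcoord x]
    calc ∫ ξ, g ξ x ∂G ≤ ∫ _, (1 : ℝ) ∂G := by
          refine integral_mono_ae hintx (integrable_const 1)
            (hae.mono fun ξ hξ => (demand_coord_bounds hξ x).2)
      _ = 1 := by simp

lemma lottery_props {X : Type*} [Fintype X] [DecidableEq X] {pref : X → X → Prop}
    (hcomp : ∀ x y, pref x y ∨ pref y x) (htrans : Transitive pref)
    {b ξhi : ℝ} {G : Measure (X → ℝ)} [IsProbabilityMeasure G] {p astar : X → ℝ}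
    (h : astar ∈ Lottery pref b G p) (o : X) (hpo : p o = 0)
    (hbound : ∀ᵐ ξ ∂G, ξ o ≤ ξhi) (hcommon : ∀ᵐ ξ ∂G, ∀ x y : X, ξ x = ξ y)
    (hxb : ξhi < b) :
    (∑ x, astar x = 1) ∧
    ∀ x, astar x ≠ 0 → ((∀ y, pref y x → p x ≤ p y) ∧
        (∀ z y, pref y z → p y ≤ p x → pref x z)) := by
  obtain ⟨g, hm, hae, hint, hcoord⟩ := lottery_coord h
  -- the good event
  have hgood : ∀ᵐ ξ ∂G, ∃ x : X, g ξ = basisVec x ∧ (p x + ξ x ≤ b) ∧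
      (∀ y, p y + ξ y ≤ b → pref x y) ∧
      (∀ y, p y + ξ y ≤ b → (∀ z, p z + ξ z ≤ b → pref y z) → p x + ξ x ≤ p y + ξ y) ∧
      (∀ u v : X, ξ u = ξ v) := by
    filter_upwards [hae, hbound, hcommon] with ξ hd hb hc
    have hne : ∃ x, (p + ξ) x ≤ b := by
      refine ⟨o, ?_⟩
      simp only [Pi.add_apply, hpo]
      linarith
    rcases hd with ⟨x, hq, hd, hopt, hcheap⟩ | ⟨hno, _⟩
    · refine ⟨x, hd, ?_, ?_, ?_, hc⟩
      · simpa using hq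
      · intro y hy; exact hopt y (by simpa using hy)
      · intro y hy hmax
        have := hcheap y (by simpa using hy) (fun z hz => hmax z (by simpa using hz))
        simpa using this
    · exact absurd hne hno
  constructor
  · -- total mass one
    have hsum : ∑ x, astar x = ∫ ξ, ∑ x, g ξ x ∂G := by
      rw [integral_finset_sum (f := fun (x : X) (ξ : X → ℝ) => g ξ x) Finset.univ (fun x _ =>
        ((ContinuousLinearMap.proj (R := ℝ) (φ := fun _ : X => ℝ) x).integrable_comp hint :
          Integrable (fun ξ => g ξ x) G))]
      exact Finset.sum_congr rfl fun x _ => hcoord x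
    rw [hsum]
    have : ∫ ξ, ∑ x, g ξ x ∂G = ∫ _, (1:ℝ) ∂G := by
      refine integral_congr_ae (hgood.mono fun ξ hξ => ?_)
      obtain ⟨x, hd, _⟩ := hξ
      show ∑ x, g ξ x = 1
      rw [hd]
      unfold basisVec
      simp
    rw [this]; simp
  · -- per-object properties
    intro x hne
    have hw : ∃ ξ : X → ℝ, (p x + ξ x ≤ b) ∧
        (∀ y, p y + ξ y ≤ b → pref x y) ∧ (∀ u v : X, ξ u = ξ v) ∧
        (∀ y, p y + ξ y ≤ b → (∀ z, p z + ξ z ≤ b → pref y z) → p x + ξ x ≤ p y + ξ y) := by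
      by_contra hno
      apply hne
      have hzero : ∀ᵐ ξ ∂G, g ξ x = 0 := by
        refine hgood.mono fun ξ hξ => ?_
        obtain ⟨y, hd, hq, hopt, hcheap, hc⟩ := hξ
        by_cases hxy : y = x
        · subst hxy
          exact absurd ⟨ξ, hq, hopt, hc, hcheap⟩ hno
        · rw [hd]
          simp [basisVec, Ne.symm hxy]
      rw [hcoord x, integral_congr_ae hzero, integral_zero]
    obtain ⟨ξ, hq, hopt, hc, hcheap⟩ := hw
    constructor
    · intro y hyx
      by_cases hy : p y + ξ y ≤ b
      · have hymax : ∀ z, p z + ξ z ≤ b → pref y z := fun z hz => htrans hyx (hopt z hz)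
        have h1 := hcheap y hy hymax
        have h2 := hc x y
        linarith
      · have h2 := hc x y
        have := not_le.1 hy
        linarith
    · intro z y hyz hpy
      have hyaff : p y + ξ y ≤ b := by
        have := hc y x
        linarith
      exact htrans (hopt y hyaff) hyz

/-- Theorem 2: under Assumptions 1–4 (no tie-breaking), every
price-equilibrium allocation is ordinally efficient. -/
theorem price_equilibrium_allocation_ordinally_efficient
    {X I : Type*} [Fintype X] [DecidableEq X] [Fintype I]
    (pref : I → X → X → Prop)
    (hcomplete : ∀ i x y, pref i x y ∨ pref i y x)
    (htrans : ∀ i, Transitive (pref i))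
    (b : I → ℝ)
    (G : Measure (X → ℝ)) [IsProbabilityMeasure G]
    (ξlo ξhi : ℝ) (hA1 : Assumption1 G ξlo ξhi)
    -- Assumption 2
    (Blo Bhi : ℝ) (hBlo : 0 < Blo) (hBhi : Blo ≤ Bhi)
    (hA2 : ∀ i, Blo ≤ b i ∧ b i ≤ Bhi)
    -- Assumption 3: the price shock is bounded away from budgets
    (hA3 : ξhi < Blo)
    -- Assumption 4 (no tie-breaking): the shock is a common shock `c·𝟙`
    (hA4 : ∀ᵐ ξ ∂G, ∀ x y : X, ξ x = ξ y)
    -- arrivals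
    (T : ℕ) (hT : 0 < T)
    (f : ℕ → I → ℝ) (hf : ∀ t i, 0 ≤ f t i)
    (hfsum : ∀ t ∈ Finset.Icc 1 T, ∑ i, f t i = 1)
    -- supply, with a null object `o` in excess supply
    (s : X → ℝ) (hs : ∀ x, 0 < s x)
    (o : X) (ho : ∑ i, ∑ n ∈ Finset.Icc 1 T, f n i < s o)
    -- a price equilibrium `p` with equilibrium allocation `astar`
    (p : X → ℝ) (hp : ∀ x, 0 ≤ p x)
    (astar : I → X → ℝ)
    (hastar : ∀ i, astar i ∈ Lottery (pref i) (b i) G p)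
    (hfeas : ∀ x, ∑ i, (∑ n ∈ Finset.Icc 1 T, f n i) * astar i x ≤ s x)
    (hclear : ∀ x, 0 < p x → ∑ i, (∑ n ∈ Finset.Icc 1 T, f n i) * astar i x = s x) :
    -- ordinal efficiency: no feasible allocation stochastically dominates `astar`
    ¬ ∃ a : I → X → ℝ,
        FeasibleAlloc (fun i => ∑ n ∈ Finset.Icc 1 T, f n i) s a ∧
        (∀ i, StochDom (pref i) (a i) (astar i)) ∧
        (∃ i, 0 < ∑ n ∈ Finset.Icc 1 T, f n i ∧
          StrictStochDom (pref i) (a i) (astar i)) := by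

  rintro ⟨a, hA, hSD, i0, hFi0, hstrict⟩
  unfold FeasibleAlloc at hA
  obtain ⟨habd, hasum, hafeas⟩ := hA
  unfold StrictStochDom at hstrict
  obtain ⟨_, x0, hx0⟩ := hstrict
  have hFnn : ∀ i, (0:ℝ) ≤ ∑ n ∈ Finset.Icc 1 T, f n i :=
    fun i => Finset.sum_nonneg fun n _ => hf n i
  have hbnds : ∀ i x, 0 ≤ astar i x ∧ astar i x ≤ 1 :=
    fun i x => lottery_nonneg_le_one (hastar i) x
  have hpo : p o = 0 := by
    rcases (hp o).eq_or_lt with h | h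
    · exact h.symm
    exfalso
    have hc := hclear o h
    have hle : ∑ i, (∑ n ∈ Finset.Icc 1 T, f n i) * astar i o
        ≤ ∑ i, ∑ n ∈ Finset.Icc 1 T, f n i :=
      Finset.sum_le_sum fun i _ => mul_le_of_le_one_right (hFnn i) (hbnds i o).2
    linarith
  have hprops := fun i : I => lottery_props (hcomplete i) (htrans i) (hastar i) o hpo
      (((hA1 o).2.2).mono fun ξ hh => hh.2) hA4 (lt_of_lt_of_le hA3 (hA2 i).1)
  have hwEx : ∀ i : I, ∃ w : X → ℝ, (∀ x y, pref i y x → w x ≤ p y) ∧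
      (∀ x, ∃ y, pref i y x ∧ p y = w x) := by
    intro i
    refine ⟨fun x => (Finset.univ.filter (fun y => pref i y x)).inf'
      ⟨x, Finset.mem_filter.2 ⟨Finset.mem_univ x, (hcomplete i x x).elim id id⟩⟩ p, ?_, ?_⟩
    · intro x y hy
      have hmem : y ∈ Finset.univ.filter (fun z => pref i z x) :=
        Finset.mem_filter.2 ⟨Finset.mem_univ y, hy⟩
      exact Finset.inf'_le p hmem
    · intro x
      obtain ⟨y, hy, hEq⟩ := Finset.exists_mem_eq_inf'
        (⟨x, Finset.mem_filter.2 ⟨Finset.mem_univ x, (hcomplete i x x).elim id id⟩⟩ :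
          (Finset.univ.filter (fun y => pref i y x)).Nonempty) p
      exact ⟨y, (Finset.mem_filter.1 hy).2, hEq.symm⟩
  choose w hw_ub hw_att using hwEx
  have hstar : ∀ i x, astar i x ≠ 0 → p x = w i x := by
    intro i x hne
    have h1 := ((hprops i).2 x hne).1
    obtain ⟨y, hy, hEq⟩ := hw_att i x
    have h2 := hw_ub i x x ((hcomplete i x x).elim id id)
    have h3 := h1 y hy
    linarith
  have hweak : ∀ i, ∑ x, p x * astar i x ≤ ∑ x, p x * a i x := by
    intro i
    exact cost_mono (hcomplete i) (htrans i) p (w i) (a i) (astar i) hp (hw_ub i)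
      (hw_att i) (fun x => (habd i x).1) (hstar i) (hSD i)
  have hstrong : ∑ x, p x * astar i0 x < ∑ x, p x * a i0 x := by
    refine cost_strict (hcomplete i0) (htrans i0) p (w i0) (a i0) (astar i0) hp (hw_ub i0)
      (hw_att i0) (fun x => (habd i0 x).1) (hstar i0) ?_ ?_ (hSD i0) x0 hx0
    · intro x y hne hle
      obtain ⟨z, hz, hEq⟩ := hw_att i0 x
      exact ((hprops i0).2 y hne).2 x z hz (by linarith)
    · rw [(hprops i0).1]
      exact hasum i0
  have hmix : ∀ (u : I → X → ℝ),
      ∑ i, (∑ n ∈ Finset.Icc 1 T, f n i) * ∑ x, p x * u i x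
        = ∑ x, p x * ∑ i, (∑ n ∈ Finset.Icc 1 T, f n i) * u i x := by
    intro u
    simp only [Finset.mul_sum]
    rw [Finset.sum_comm]
    exact Finset.sum_congr rfl fun x _ => Finset.sum_congr rfl fun i _ => by ring
  have hlt : ∑ i, (∑ n ∈ Finset.Icc 1 T, f n i) * ∑ x, p x * astar i x
      < ∑ i, (∑ n ∈ Finset.Icc 1 T, f n i) * ∑ x, p x * a i x := by
    refine Finset.sum_lt_sum (fun i _ => mul_le_mul_of_nonneg_left (hweak i) (hFnn i))
      ⟨i0, Finset.mem_univ i0, mul_lt_mul_of_pos_left hstrong hFi0⟩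
  rw [hmix astar, hmix a] at hlt
  have e2 : ∑ x, p x * ∑ i, (∑ n ∈ Finset.Icc 1 T, f n i) * astar i x = ∑ x, p x * s x := by
    refine Finset.sum_congr rfl fun x _ => ?_
    rcases (hp x).eq_or_lt with h | h
    · rw [← h]; ring
    · rw [hclear x h]
  have e3 : ∑ x, p x * ∑ i, (∑ n ∈ Finset.Icc 1 T, f n i) * a i x ≤ ∑ x, p x * s x :=
    Finset.sum_le_sum fun x _ => mul_le_mul_of_nonneg_left (hafeas x) (hp x)
  rw [e2] at hlt
  linarith
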